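/- arXiv:2205.13756 — 5 statements merged into one kernel-verified Lean document; each statement's English description precedes it below -/
import Mathlib

section
/- For all y₁ > 0, y₂ ≥ 0, and κ ∈ (0, 1], one has κ·log₂(1 + y₁/(κ + y₂)) ≤ log₂(1 + y₁/(1 + y₂)), with equality when κ = 1. -/
theorem bandwidth_split_rate_le (y₁ y₂ κ : ℝ) (hy₁ : 0 < y₁) (hy₂ : 0 ≤ y₂)
    (hκ : κ ∈ Set.Ioc (0 : ℝ) 1) :
    κ * Real.logb 2 (1 + y₁ / (κ + y₂)) ≤ Real.logb 2 (1 + y₁ / (1 + y₂)) ∧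
      (κ = 1 → κ * Real.logb 2 (1 + y₁ / (κ + y₂)) = Real.logb 2 (1 + y₁ / (1 + y₂))) := by
  obtain ⟨hκ0, hκ1⟩ := hκ
  constructor
  · have hden : 0 < κ + y₂ := by linarith
    have hx : 0 ≤ y₁ / (κ + y₂) := by positivity
    have h1 : (1 + y₁ / (κ + y₂)) ^ κ ≤ 1 + κ * (y₁ / (κ + y₂)) :=
      rpow_one_add_le_one_add_mul_self (by linarith) hκ0.le hκ1
    have h2 : κ * (y₁ / (κ + y₂)) ≤ y₁ / (1 + y₂) := by
      rw [mul_div_assoc', div_le_div_iff₀ hden (by linarith)]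
      nlinarith [mul_nonneg (mul_nonneg hy₁.le hy₂) (sub_nonneg.mpr hκ1)]
    have key : (1 + y₁ / (κ + y₂)) ^ κ ≤ 1 + y₁ / (1 + y₂) := h1.trans (by linarith)
    have hpos : (0:ℝ) < 1 + y₁ / (κ + y₂) := by linarith
    calc κ * Real.logb 2 (1 + y₁ / (κ + y₂))
        = Real.logb 2 ((1 + y₁ / (κ + y₂)) ^ κ) := by
          rw [Real.logb, Real.logb, Real.log_rpow hpos, mul_div_assoc]
      _ ≤ Real.logb 2 (1 + y₁ / (1 + y₂)) := by
          gcongr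
          · norm_num
  · rintro rfl; rw [one_mul]
end

section
/- For all y₁ > 0, y₂ ≥ 0, κ ∈ (0, 1], and μ ∈ (0, 1], one has κ·log₂(1 + y₁/(κ + y₂)) ≤ log₂(1 + (y₁/μ)/(1 + y₂/μ)), with equality when κ = μ = 1. -/
theorem fdsac_rate_le_isac_rate (y₁ y₂ κ μ : ℝ) (hy₁ : 0 < y₁) (hy₂ : 0 ≤ y₂)
    (hκ : κ ∈ Set.Ioc (0 : ℝ) 1) (hμ : μ ∈ Set.Ioc (0 : ℝ) 1) :
    κ * Real.logb 2 (1 + y₁ / (κ + y₂)) ≤ Real.logb 2 (1 + (y₁ / μ) / (1 + y₂ / μ)) ∧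
      (κ = 1 → μ = 1 →
        κ * Real.logb 2 (1 + y₁ / (κ + y₂)) = Real.logb 2 (1 + (y₁ / μ) / (1 + y₂ / μ))) := by
  obtain ⟨hκ0, hκ1⟩ := hκ
  obtain ⟨hμ0, hμ1⟩ := hμ
  have hμκ : (y₁ / μ) / (1 + y₂ / μ) = y₁ / (μ + y₂) := by
    field_simp
  constructor
  · rw [hμκ]
    set t := y₁ / (κ + y₂) with ht
    have hκy : 0 < κ + y₂ := by linarith
    have hμy : 0 < μ + y₂ := by linarith
    have ht0 : 0 < t := div_pos hy₁ hκy
    -- Bernoulli: (1+t)^κ ≤ 1 + κ*t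
    have hb : (1 + t) ^ κ ≤ 1 + κ * t :=
      rpow_one_add_le_one_add_mul_self (by linarith) hκ0.le hκ1
    have h1 : κ * Real.logb 2 (1 + t) = Real.logb 2 ((1 + t) ^ κ) := by
      rw [Real.logb_rpow_eq_mul_logb_of_pos (by linarith)]
    have hpow_pos : (0:ℝ) < (1 + t) ^ κ := Real.rpow_pos_of_pos (by linarith) _
    have h2 : Real.logb 2 ((1 + t) ^ κ) ≤ Real.logb 2 (1 + κ * t) :=
      Real.logb_le_logb_of_le one_lt_two hpow_pos hb
    have h3 : κ * t ≤ y₁ / (μ + y₂) := by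
      rw [ht, mul_div_assoc', div_le_div_iff₀ hκy hμy]
      nlinarith [mul_nonneg (sub_nonneg.2 hκ1) (mul_nonneg hy₁.le hy₂), mul_nonneg (mul_nonneg hκ0.le (sub_nonneg.2 hμ1)) hy₁.le]
    have h4 : Real.logb 2 (1 + κ * t) ≤ Real.logb 2 (1 + y₁ / (μ + y₂)) :=
      Real.logb_le_logb_of_le one_lt_two (by nlinarith) (by linarith)
    linarith [h1 ▸ h2]
  · rintro rfl rfl
    rw [hμκ]
    norm_num
end

section
/- Let X be exponential with rate λ > 0. Then E[ln(1 + pX)] = −e^{λ/p}·Ei(−λ/p) for any p > 0, where Ei is the exponential integral. -/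
open MeasureTheory ProbabilityTheory

/-- The exponential integral `Ei x = -∫_{-x}^∞ e^{-t}/t dt`. -/
noncomputable def Ei (x : ℝ) : ℝ := -∫ t in Set.Ioi (-x), Real.exp (-t) / t

section Aux

open Real Set Filter Topology intervalIntegral
open scoped ENNReal NNReal

lemma aux_expint_integrable {a : ℝ} (ha : 0 < a) :
    IntegrableOn (fun t : ℝ => Real.exp (-t) / t) (Set.Ioi a) := by
  have h1 : IntegrableOn (fun t : ℝ => Real.exp (-1 * t) / a) (Set.Ioi a) :=
    (exp_neg_integrableOn_Ioi a one_pos).div_const a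
  refine h1.mono' ?_ ?_
  · apply Measurable.aestronglyMeasurable
    exact (Real.measurable_exp.comp measurable_neg).div measurable_id
  · filter_upwards [ae_restrict_mem measurableSet_Ioi] with t (ht : a < t)
    have h0 : 0 < t := ha.trans ht
    rw [Real.norm_eq_abs, abs_of_nonneg (by positivity), neg_one_mul]
    exact div_le_div_of_nonneg_left (Real.exp_pos _).le ha ht.le

lemma aux_log_integrable {lam p : ℝ} (hlam : 0 < lam) (hp : 0 < p) :
    IntegrableOn (fun x : ℝ => Real.exp (-(lam * x)) * Real.log (1 + p * x))
      (Set.Ioi 0) := by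
  have h1 : IntegrableOn (fun x : ℝ => p * (x ^ (1:ℝ) * Real.exp (-lam * x ^ (1:ℝ))))
      (Set.Ioi 0) :=
    (integrableOn_rpow_mul_exp_neg_mul_rpow (by norm_num) one_pos hlam).const_mul p
  refine h1.mono' ?_ ?_
  · apply Measurable.aestronglyMeasurable
    exact (Real.measurable_exp.comp (measurable_const.mul measurable_id).neg).mul
      ((measurable_const.add (measurable_const.mul measurable_id)).log)
  · filter_upwards [ae_restrict_mem measurableSet_Ioi] with x (hx : 0 < x)
    have h1x : (0:ℝ) < 1 + p * x := by positivity
    have hlog0 : 0 ≤ Real.log (1 + p * x) := Real.log_nonneg (by nlinarith)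
    have hlog : Real.log (1 + p * x) ≤ p * x := by
      have := Real.log_le_sub_one_of_pos h1x
      linarith
    rw [Real.norm_eq_abs, abs_of_nonneg (by positivity)]
    rw [Real.rpow_one]
    calc Real.exp (-(lam * x)) * Real.log (1 + p * x)
        ≤ Real.exp (-(lam * x)) * (p * x) := by
          exact mul_le_mul_of_nonneg_left hlog (Real.exp_pos _).le
      _ = p * (x * Real.exp (-lam * x)) := by ring_nf

lemma aux_finite {lam p : ℝ} (hlam : 0 < lam) (hp : 0 < p) {b : ℝ} (hb : 0 ≤ b) :
    ∫ x in (0:ℝ)..b, lam * Real.exp (-(lam * x)) * Real.log (1 + p * x)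
      = -(Real.exp (-(lam * b)) * Real.log (1 + p * b))
        + Real.exp (lam / p) * ∫ t in (lam / p)..(lam / p + lam * b), Real.exp (-t) / t := by
  set a := lam / p with ha_def
  have ha : 0 < a := div_pos hlam hp
  have hpos : ∀ x ∈ Set.uIcc (0:ℝ) b, (0:ℝ) < 1 + p * x := by
    intro x hx
    rw [Set.uIcc_of_le hb] at hx
    nlinarith [hx.1]
  -- integration by parts
  have hu : ∀ x ∈ Set.uIcc (0:ℝ) b,
      HasDerivAt (fun x => Real.log (1 + p * x)) (p / (1 + p * x)) x := by
    intro x hx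
    have h1 : HasDerivAt (fun x : ℝ => 1 + p * x) p x := by
      simpa using ((hasDerivAt_id x).const_mul p).const_add 1
    exact h1.log (hpos x hx).ne'
  have hv : ∀ x ∈ Set.uIcc (0:ℝ) b,
      HasDerivAt (fun x => -Real.exp (-(lam * x))) (lam * Real.exp (-(lam * x))) x :=
    fun x _ => hasDerivAt_neg_exp_mul_exp
  have hu' : IntervalIntegrable (fun x => p / (1 + p * x)) volume 0 b := by
    apply ContinuousOn.intervalIntegrable
    exact continuousOn_const.div (by fun_prop) (fun x hx => (hpos x hx).ne')
  have hv' : IntervalIntegrable (fun x => lam * Real.exp (-(lam * x))) volume 0 b := by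
    apply Continuous.intervalIntegrable; fun_prop
  have ibp := intervalIntegral.integral_mul_deriv_eq_deriv_mul hu hv hu' hv'
  -- substitution in the remaining integral
  have hsub : ∫ x in (0:ℝ)..b, lam • ((fun t => Real.exp a * Real.exp (-t) / t) ∘
        (fun x => a + lam * x)) x = ∫ t in (a + lam * 0)..(a + lam * b),
        Real.exp a * Real.exp (-t) / t := by
    apply intervalIntegral.integral_comp_smul_deriv' (f' := fun _ => lam)
    · intro x _
      simpa using ((hasDerivAt_id x).const_mul lam).const_add a
    · exact continuousOn_const
    · refine ContinuousOn.div (by fun_prop) continuousOn_id ?_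
      rintro t ⟨x, hx, rfl⟩
      rw [Set.uIcc_of_le hb] at hx
      have : 0 < a + lam * x := by nlinarith [hx.1]
      exact this.ne'
  have hrw : ∀ x ∈ Set.uIcc (0:ℝ) b,
      lam • ((fun t => Real.exp a * Real.exp (-t) / t) ∘ (fun x => a + lam * x)) x
        = p / (1 + p * x) * -(-Real.exp (-(lam * x))) := by
    intro x hx
    have h1 : 0 < 1 + p * x := hpos x hx
    have h2 : a + lam * x = a * (1 + p * x) := by
      field_simp [ha_def]
      have hap' : a * p = lam := by rw [ha_def]; field_simp
      linear_combination (-x) * hap'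
    simp only [Function.comp, smul_eq_mul, h2, neg_neg]
    have hap : a * p = lam := by rw [ha_def]; field_simp
    have h3 : Real.exp (-(a * (1 + p * x))) = Real.exp (-a) * Real.exp (-(lam * x)) := by
      rw [← Real.exp_add]
      congr 1
      nlinarith [hap]
    have key : Real.exp a * (Real.exp (-a) * Real.exp (-(lam * x)))
        = Real.exp (-(lam * x)) := by
      rw [← mul_assoc, ← Real.exp_add, add_neg_cancel, Real.exp_zero, one_mul]
    rw [h3, Real.exp_neg, ha_def]
    field_simp
  have e1 : ∫ x in (0:ℝ)..b, lam * Real.exp (-(lam * x)) * Real.log (1 + p * x)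
      = ∫ x in (0:ℝ)..b, Real.log (1 + p * x) * (lam * Real.exp (-(lam * x))) := by
    apply intervalIntegral.integral_congr; intro x _; ring
  have e2 : ∫ x in (0:ℝ)..b, p / (1 + p * x) * -Real.exp (-(lam * x))
      = -(Real.exp a * ∫ t in a..(a + lam * b), Real.exp (-t) / t) := by
    have e3 : ∫ x in (0:ℝ)..b, p / (1 + p * x) * -Real.exp (-(lam * x))
        = -∫ x in (0:ℝ)..b,
            lam • ((fun t => Real.exp a * Real.exp (-t) / t) ∘ (fun x => a + lam * x)) x := by
      rw [← intervalIntegral.integral_neg]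
      apply intervalIntegral.integral_congr
      intro x hx
      show p / (1 + p * x) * -Real.exp (-(lam * x))
        = -(lam • ((fun t => Real.exp a * Real.exp (-t) / t) ∘ (fun x => a + lam * x)) x)
      rw [hrw x hx]; ring
    rw [e3, hsub]
    simp only [mul_div_assoc]
    rw [intervalIntegral.integral_const_mul]
    simp [mul_div_assoc]
  rw [e1, ibp, e2]
  simp
  ring

lemma aux_step2 {lam p : ℝ} (hlam : 0 < lam) (hp : 0 < p) :
    ∫ x in Set.Ioi 0, lam * Real.exp (-(lam * x)) * Real.log (1 + p * x)
      = Real.exp (lam / p) * ∫ t in Set.Ioi (lam / p), Real.exp (-t) / t := by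
  set a := lam / p with ha_def
  have ha : 0 < a := div_pos hlam hp
  set f := fun x => lam * Real.exp (-(lam * x)) * Real.log (1 + p * x) with hf_def
  have hFi : IntegrableOn f (Set.Ioi 0) := by
    have := (aux_log_integrable hlam hp).const_mul lam
    simpa [hf_def, mul_assoc, IntegrableOn] using this
  have t1 : Tendsto (fun b => ∫ x in (0:ℝ)..b, f x) atTop (𝓝 (∫ x in Set.Ioi 0, f x)) :=
    intervalIntegral_tendsto_integral_Ioi 0 hFi tendsto_id
  have hlb : Tendsto (fun b : ℝ => lam * b) atTop atTop :=
    Tendsto.const_mul_atTop hlam tendsto_id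
  have t2 : Tendsto (fun b => ∫ t in a..(a + lam * b), Real.exp (-t) / t) atTop
      (𝓝 (∫ t in Set.Ioi a, Real.exp (-t) / t)) :=
    intervalIntegral_tendsto_integral_Ioi a (aux_expint_integrable ha)
      (tendsto_atTop_add_const_left _ a hlb)
  have t3 : Tendsto (fun b : ℝ => Real.exp (-(lam * b)) * Real.log (1 + p * b)) atTop (𝓝 0) := by
    have hb0 : Tendsto (fun b : ℝ => (p / lam) * ((lam * b) ^ 1 * Real.exp (-(lam * b))))
        atTop (𝓝 0) := by
      have := (Real.tendsto_pow_mul_exp_neg_atTop_nhds_zero 1).comp hlb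
      simpa using this.const_mul (p / lam)
    apply squeeze_zero' ?_ ?_ hb0
    · filter_upwards [eventually_ge_atTop (0:ℝ)] with b hb
      exact mul_nonneg (Real.exp_pos _).le (Real.log_nonneg (by nlinarith))
    · filter_upwards [eventually_ge_atTop (0:ℝ)] with b hb
      have h1x : (0:ℝ) < 1 + p * b := by positivity
      have hlog : Real.log (1 + p * b) ≤ p * b := by
        have := Real.log_le_sub_one_of_pos h1x
        linarith
      calc Real.exp (-(lam * b)) * Real.log (1 + p * b)
          ≤ Real.exp (-(lam * b)) * (p * b) :=
            mul_le_mul_of_nonneg_left hlog (Real.exp_pos _).le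
        _ = (p / lam) * ((lam * b) ^ 1 * Real.exp (-(lam * b))) := by
            field_simp
  have t4 : Tendsto (fun b => ∫ x in (0:ℝ)..b, f x) atTop
      (𝓝 (-0 + Real.exp a * ∫ t in Set.Ioi a, Real.exp (-t) / t)) := by
    apply Tendsto.congr' ?_ ((t3.neg).add (t2.const_mul (Real.exp a)))
    filter_upwards [eventually_ge_atTop (0:ℝ)] with b hb
    exact (aux_finite hlam hp hb).symm
  have := tendsto_nhds_unique t1 t4
  simpa using this

lemma aux_step1 {lam p : ℝ} (hlam : 0 < lam) :
    ∫ x, Real.log (1 + p * x) ∂(expMeasure lam)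
      = ∫ x in Set.Ioi 0, lam * Real.exp (-(lam * x)) * Real.log (1 + p * x) := by
  have hmeq : expMeasure lam
      = volume.withDensity (fun x => ((exponentialPDFReal lam x).toNNReal : ℝ≥0∞)) := rfl
  have hmeas : Measurable (fun x => (exponentialPDFReal lam x).toNNReal) :=
    (measurable_exponentialPDFReal lam).real_toNNReal
  rw [hmeq, integral_withDensity_eq_integral_smul hmeas]
  have h1 : ∀ x : ℝ, (exponentialPDFReal lam x).toNNReal • Real.log (1 + p * x)
      = exponentialPDFReal lam x * Real.log (1 + p * x) := by
    intro x
    rw [NNReal.smul_def, Real.coe_toNNReal _ (exponentialPDFReal_nonneg hlam x), smul_eq_mul]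
  simp_rw [h1]
  rw [← setIntegral_eq_integral_of_forall_compl_eq_zero (s := Set.Ioi 0)]
  · refine setIntegral_congr_fun measurableSet_Ioi fun x hx => ?_
    have hx' : (0:ℝ) < x := hx
    simp [exponentialPDFReal, gammaPDFReal, hx'.le, Real.Gamma_one]
  · intro x hx
    simp only [Set.mem_Ioi, not_lt] at hx
    rcases lt_or_eq_of_le hx with h | h
    · simp [exponentialPDFReal, gammaPDFReal, not_le.mpr h]
    · subst h; simp

end Aux

theorem ergodic_rate_exponential (lam p : ℝ) (hlam : 0 < lam) (hp : 0 < p) :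
    ∫ x, Real.log (1 + p * x) ∂(expMeasure lam) =
      -(Real.exp (lam / p) * Ei (-(lam / p))) := by
  rw [aux_step1 hlam, aux_step2 hlam hp]
  have : Ei (-(lam / p)) = -∫ t in Set.Ioi (lam / p), Real.exp (-t) / t := by
    rw [Ei, neg_neg]
  rw [this]
  ring
end

section
/- Let R be an M×M Hermitian PSD matrix with positive eigenvalues λ₁,…,λ_r, and let p, L, σ² > 0, κ ∈ [0, 1), μ ∈ [0, 1]. Then ((1−κ)/L)·log₂ det(I + ((1−μ)pL/((1−κ)σ²))·R) ≤ (1/L)·log₂ det(I + (pL/σ²)·R), with equality when κ = μ = 0. -/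
open Matrix
open scoped ComplexOrder

lemma det_one_add_smul_herm {M : ℕ} {R : Matrix (Fin M) (Fin M) ℂ}
    (hR : R.IsHermitian) (c : ℝ) :
    ((1 + ((c : ℂ)) • R).det).re = ∏ i, (1 + c * hR.eigenvalues i) := by
  have hU := (Matrix.mem_unitaryGroup_iff).mp (hR.eigenvectorUnitary).2
  have key : (1 : Matrix (Fin M) (Fin M) ℂ) + (c : ℂ) • R
      = (hR.eigenvectorUnitary : Matrix (Fin M) (Fin M) ℂ) *
        (1 + (c : ℂ) • diagonal (RCLike.ofReal ∘ hR.eigenvalues)) *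
        (star (hR.eigenvectorUnitary : Matrix (Fin M) (Fin M) ℂ)) := by
    rw [mul_add, add_mul, mul_one, hU]
    rw [Matrix.mul_smul, Matrix.smul_mul]
    congr 1
    exact congrArg (fun X => (c : ℂ) • X) hR.spectral_theorem
  rw [key, det_mul_right_comm, hU, one_mul]
  have : (1 : Matrix (Fin M) (Fin M) ℂ) + (c : ℂ) • diagonal (RCLike.ofReal ∘ hR.eigenvalues)
      = diagonal (fun i => ((1 + c * hR.eigenvalues i : ℝ) : ℂ)) := by
    ext i j
    rcases eq_or_ne i j with h | h
    · subst h
      simp only [Matrix.add_apply, Matrix.smul_apply, Matrix.one_apply_eq,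
        Matrix.diagonal_apply_eq, Function.comp_apply, smul_eq_mul]
      push_cast
      rfl
    · simp [Matrix.one_apply_ne h, Matrix.diagonal_apply_ne _ h]
  rw [this, det_diagonal]
  norm_cast

lemma scalar_key {a c t s : ℝ} (ha : 0 ≤ a) (hc : 0 ≤ c) (ht0 : 0 < t) (ht1 : t ≤ 1)
    (hs0 : 0 ≤ s) (hs1 : s ≤ 1) :
    t * Real.log (1 + s * c / t * a) ≤ Real.log (1 + c * a) := by
  set y := s * c / t * a with hy
  have hy0 : 0 ≤ y := by positivity
  have h1y : 0 < 1 + y := by linarith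
  have hber : (1 + y) ^ t ≤ 1 + t * y := by
    have := rpow_one_add_le_one_add_mul_self (s := y) (by linarith) ht0.le ht1
    linarith
  have hty : t * y ≤ c * a := by
    have : t * y = s * (c * a) := by
      field_simp [hy]
      rw [hy]; field_simp [ht0.ne']
    rw [this]
    nlinarith [mul_nonneg hc ha]
  calc t * Real.log (1 + y) = Real.log ((1 + y) ^ t) := (Real.log_rpow h1y t).symm
    _ ≤ Real.log (1 + c * a) := by
        apply Real.log_le_log (by positivity)
        linarith

theorem fdsac_sensing_rate_le_isac (M r : ℕ) (hr : r ≤ M)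
    (R : Matrix (Fin M) (Fin M) ℂ) (hR : R.PosSemidef)
    (p L σ2 κ μ : ℝ) (hp : 0 < p) (hL : 0 < L) (hσ : 0 < σ2)
    (hκ : κ ∈ Set.Ico (0 : ℝ) 1) (hμ : μ ∈ Set.Icc (0 : ℝ) 1)
    (hpos : ∀ i : Fin M, (i : ℕ) < r → 0 < hR.1.eigenvalues i)
    (hzero : ∀ i : Fin M, r ≤ (i : ℕ) → hR.1.eigenvalues i = 0) :
    ((1 - κ) / L) * Real.logb 2
        ((1 + (((1 - μ) * p * L / ((1 - κ) * σ2) : ℝ) : ℂ) • R).det).re ≤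
      (1 / L) * Real.logb 2 ((1 + ((p * L / σ2 : ℝ) : ℂ) • R).det).re ∧
    (κ = 0 → μ = 0 →
      ((1 - κ) / L) * Real.logb 2
          ((1 + (((1 - μ) * p * L / ((1 - κ) * σ2) : ℝ) : ℂ) • R).det).re =
        (1 / L) * Real.logb 2 ((1 + ((p * L / σ2 : ℝ) : ℂ) • R).det).re) := by
  obtain ⟨hκ0, hκ1⟩ := hκ
  obtain ⟨hμ0, hμ1⟩ := hμ
  constructor
  · set c : ℝ := p * L / σ2 with hc
    have hc0 : 0 < c := by positivity
    set t : ℝ := 1 - κ with ht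
    have ht0 : 0 < t := by simp [ht]; linarith
    have ht1 : t ≤ 1 := by simp [ht]; linarith
    set s : ℝ := 1 - μ with hs
    have hs0 : 0 ≤ s := by simp [hs]; linarith
    have hs1 : s ≤ 1 := by simp [hs]; linarith
    have hc' : (1 - μ) * p * L / ((1 - κ) * σ2) = s * c / t := by
      rw [hs, ht, hc]; field_simp
    rw [hc', det_one_add_smul_herm hR.1, det_one_add_smul_herm hR.1]
    have hev : ∀ i, 0 ≤ hR.1.eigenvalues i := hR.eigenvalues_nonneg
    have hlog2 : (0:ℝ) < Real.log 2 := Real.log_pos (by norm_num)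
    rw [Real.logb, Real.logb,
      Real.log_prod (fun i _ => by have := hev i; positivity),
      Real.log_prod (fun i _ => by have := hev i; positivity)]
    have hsum : t * (∑ i, Real.log (1 + s * c / t * hR.1.eigenvalues i)) ≤
        ∑ i, Real.log (1 + c * hR.1.eigenvalues i) := by
      rw [Finset.mul_sum]
      exact Finset.sum_le_sum fun i _ => scalar_key (hev i) hc0.le ht0 ht1 hs0 hs1
    rw [div_mul_div_comm, div_mul_div_comm, one_mul,
      div_le_div_iff_of_pos_right (by positivity : (0:ℝ) < L * Real.log 2)]
    exact hsum
  · intro h0 h1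
    subst h0; subst h1
    norm_num
end

section
/- Let X be exponential with rate λ > 0, let a_F, a_N > 0 with a_N + a_F = 1, and p > 0, σ² > 0. Then E[log₂(1 + (pX a_F)/(σ² + pX a_N))] = (1/ln 2)·(e^{λσ²/(a_N p)}·Ei(−λσ²/(a_N p)) − e^{λσ²/p}·Ei(−λσ²/p)), and as p → ∞ this converges to −log₂ a_N. -/
open MeasureTheory ProbabilityTheory
open Real Set Filter
open scoped ENNReal NNReal

noncomputable def Phi (y : ℝ) : ℝ := ∫ t in Set.Ioi y, Real.exp (-t) / t

lemma integrableOn_expdiv {a : ℝ} (ha : 0 < a) :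
    IntegrableOn (fun t => Real.exp (-t) / t) (Set.Ioi a) := by
  refine (((exp_neg_integrableOn_Ioi a one_pos).const_mul (1/a)).mono' ?_ ?_)
  · exact ((Real.measurable_exp.comp measurable_neg).div measurable_id).aestronglyMeasurable
  · filter_upwards [ae_restrict_mem measurableSet_Ioi] with t ht
    have ht' : a < t := ht
    have h1 : Real.exp (-1*t) = Real.exp (-t) := by norm_num
    rw [Real.norm_eq_abs, abs_div, abs_of_nonneg (Real.exp_nonneg _), abs_of_pos (ha.trans ht'),
      h1, one_div, inv_mul_eq_div, div_le_div_iff₀ (ha.trans ht') ha]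
    have := Real.exp_nonneg (-t)
    nlinarith

lemma Phi_eq {y₀ z : ℝ} (hy₀ : 0 < y₀) (hz : y₀ < z) :
    Phi z = Phi y₀ - ∫ t in y₀..z, Real.exp (-t) / t := by
  have hsub : Set.Ioc y₀ z ∪ Set.Ioi z = Set.Ioi y₀ := Ioc_union_Ioi_eq_Ioi hz.le
  have h1 : IntegrableOn (fun t => Real.exp (-t) / t) (Set.Ioc y₀ z) :=
    (integrableOn_expdiv hy₀).mono Ioc_subset_Ioi_self le_rfl
  have h2 : IntegrableOn (fun t => Real.exp (-t) / t) (Set.Ioi z) :=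
    integrableOn_expdiv (hy₀.trans hz)
  have := setIntegral_union (Set.Ioc_disjoint_Ioi le_rfl) measurableSet_Ioi h1 h2
  rw [hsub] at this
  rw [intervalIntegral.integral_of_le hz.le]
  unfold Phi
  rw [this]; ring

lemma Phi_hasDeriv {y : ℝ} (hy : 0 < y) : HasDerivAt Phi (-(Real.exp (-y) / y)) y := by
  set y₀ := y/2 with hy₀def
  have hy₀ : 0 < y₀ := by positivity
  have hyy : y₀ < y := by simp [hy₀def]; linarith
  have hev : Phi =ᶠ[nhds y] (fun z => Phi y₀ - ∫ t in y₀..z, Real.exp (-t) / t) := by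
    filter_upwards [Ioi_mem_nhds hyy] with z hz
    exact Phi_eq hy₀ hz
  have hcont : ContinuousAt (fun t => Real.exp (-t) / t) y :=
    ((Real.continuous_exp.comp continuous_neg).continuousAt).div continuousAt_id hy.ne'
  have hint : IntervalIntegrable (fun t => Real.exp (-t) / t) volume y₀ y := by
    rw [intervalIntegrable_iff_integrableOn_Ioc_of_le hyy.le]
    exact (integrableOn_expdiv hy₀).mono Ioc_subset_Ioi_self le_rfl
  have hd : HasDerivAt (fun z => ∫ t in y₀..z, Real.exp (-t) / t) (Real.exp (-y) / y) y :=
    intervalIntegral.integral_hasDerivAt_right hint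
      ((((Real.measurable_exp.comp measurable_neg).div measurable_id).stronglyMeasurable).stronglyMeasurableAtFilter) hcont
  have : HasDerivAt (fun z => Phi y₀ - ∫ t in y₀..z, Real.exp (-t) / t)
      (-(Real.exp (-y) / y)) y := (hd.const_sub _)
  exact this.congr_of_eventuallyEq hev

lemma Phi_nonneg {y : ℝ} (hy : 0 ≤ y) : 0 ≤ Phi y := by
  apply setIntegral_nonneg measurableSet_Ioi
  intro t ht
  have : 0 < t := lt_of_le_of_lt hy ht
  positivity

lemma Phi_tendsto : Tendsto Phi atTop (nhds 0) := by
  have h : ∀ᶠ y in atTop, Phi y ≤ Real.exp (-y) := by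
    filter_upwards [eventually_ge_atTop (1:ℝ)] with y hy
    calc Phi y ≤ ∫ t in Set.Ioi y, Real.exp (-t) := by
          apply setIntegral_mono_on (integrableOn_expdiv (by linarith))
            (exp_neg_integrableOn_Ioi y one_pos |>.congr_fun (by intro x _; norm_num)
              measurableSet_Ioi) measurableSet_Ioi
          intro t ht
          have ht1 : (1:ℝ) ≤ t := hy.trans (le_of_lt ht)
          rw [div_le_iff₀ (by linarith)]
          nlinarith [Real.exp_nonneg (-t)]
      _ = Real.exp (-y) := integral_exp_neg_Ioi y
  have h0 : ∀ᶠ y in atTop, 0 ≤ Phi y := by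
    filter_upwards [eventually_ge_atTop (0:ℝ)] with y hy using Phi_nonneg hy
  have hexp : Tendsto (fun y : ℝ => Real.exp (-y)) atTop (nhds 0) :=
    Real.tendsto_exp_neg_atTop_nhds_zero
  exact tendsto_of_tendsto_of_tendsto_of_le_of_le' tendsto_const_nhds hexp h0 h

lemma integrableOn_g {lam c : ℝ} (hlam : 0 < lam) (hc : 0 < c) :
    IntegrableOn (fun x => lam * Real.exp (-(lam*x)) * Real.log (1+c*x)) (Set.Ioi 0) := by
  refine ((exp_neg_integrableOn_Ioi 0 (half_pos hlam)).const_mul (2*c)).mono' ?_ ?_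
  · exact ((measurable_const.mul
      (Real.measurable_exp.comp (measurable_id.const_mul _).neg)).mul
      (Real.measurable_log.comp (measurable_const.add (measurable_id.const_mul _)))).aestronglyMeasurable
  · filter_upwards [ae_restrict_mem measurableSet_Ioi] with x hx
    have hx0 : (0:ℝ) < x := hx
    have hlog0 : 0 ≤ Real.log (1 + c*x) := Real.log_nonneg (by nlinarith)
    have hlog : Real.log (1 + c*x) ≤ c*x := by
      have := Real.log_le_sub_one_of_pos (x := 1 + c*x) (by nlinarith)
      linarith
    have hkey : lam * x ≤ 2 * Real.exp (lam/2 * x) := by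
      have := Real.add_one_le_exp (lam/2 * x)
      nlinarith [Real.exp_nonneg (lam/2*x)]
    have hnorm : ‖lam * Real.exp (-(lam*x)) * Real.log (1+c*x)‖
        = lam * Real.exp (-(lam*x)) * Real.log (1+c*x) := by
      rw [Real.norm_eq_abs, abs_of_nonneg]; positivity
    rw [hnorm, neg_mul]
    have h2 : Real.exp (-(lam/2 * x)) = Real.exp (lam/2*x) * Real.exp (-(lam*x)) := by
      rw [← Real.exp_add]; ring_nf
    calc lam * Real.exp (-(lam*x)) * Real.log (1+c*x)
        ≤ lam * Real.exp (-(lam*x)) * (c*x) := by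
          apply mul_le_mul_of_nonneg_left hlog (by positivity)
      _ = c * (lam * x) * Real.exp (-(lam*x)) := by ring
      _ ≤ c * (2 * Real.exp (lam/2*x)) * Real.exp (-(lam*x)) := by
          apply mul_le_mul_of_nonneg_right (mul_le_mul_of_nonneg_left hkey hc.le)
            (Real.exp_nonneg _)
      _ = 2*c * Real.exp (-(lam/2 * x)) := by rw [h2]; ring

lemma key {lam c : ℝ} (hlam : 0 < lam) (hc : 0 < c) :
    ∫ x in Set.Ioi 0, lam * Real.exp (-(lam*x)) * Real.log (1+c*x)
      = Real.exp (lam/c) * Phi (lam/c) := by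
  set F : ℝ → ℝ := fun x => -Real.exp (-(lam*x)) * Real.log (1+c*x)
    - Real.exp (lam/c) * Phi (lam*x + lam/c) with hF
  have hderiv : ∀ x : ℝ, -(1/c) < x →
      HasDerivAt F (lam * Real.exp (-(lam*x)) * Real.log (1+c*x)) x := by
    intro x hx
    have h1cx : 0 < 1 + c*x := by
      have : -(1/c)*c < x*c := by exact mul_lt_mul_of_pos_right hx hc
      field_simp at this; nlinarith
    have harg : 0 < lam*x + lam/c := by
      have : lam * (-(1/c)) < lam * x := by exact mul_lt_mul_of_pos_left hx hlam
      have h2 : lam * (-(1/c)) = -(lam/c) := by ring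
      linarith [h2 ▸ this]
    have d1 : HasDerivAt (fun x : ℝ => Real.exp (-(lam*x))) (-lam * Real.exp (-(lam*x))) x := by
      have : HasDerivAt (fun x : ℝ => -(lam*x)) (-lam) x := by
        simpa using (hasDerivAt_id x).const_mul (-lam)
      simpa [mul_comm] using this.exp
    have d2 : HasDerivAt (fun x : ℝ => Real.log (1+c*x)) (c / (1+c*x)) x := by
      have h : HasDerivAt (fun x : ℝ => 1+c*x) c x := by
        simpa using ((hasDerivAt_id x).const_mul c).const_add 1
      simpa using h.log h1cx.ne'
    have d3 : HasDerivAt (fun x : ℝ => Phi (lam*x + lam/c))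
        (-(Real.exp (-(lam*x + lam/c)) / (lam*x + lam/c)) * lam) x := by
      have h : HasDerivAt (fun x : ℝ => lam*x + lam/c) lam x := by
        simpa using ((hasDerivAt_id x).const_mul lam).add_const (lam/c)
      exact (Phi_hasDeriv harg).comp x h
    have := ((d1.neg.mul d2).sub ((d3.const_mul (Real.exp (lam/c)))))
    refine this.congr_deriv ?_
    have hee : Real.exp (lam/c) * Real.exp (-(lam*x + lam/c)) = Real.exp (-(lam*x)) := by
      rw [← Real.exp_add]; ring_nf
    have hAc : lam / (lam*x+lam/c) = c/(1+c*x) := by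
      rw [div_eq_div_iff harg.ne' h1cx.ne']
      field_simp
      ring
    have h4 : Real.exp (lam/c) * (-(Real.exp (-(lam*x+lam/c)) / (lam*x+lam/c)) * lam)
        = -(Real.exp (-(lam*x)) * (c/(1+c*x))) := by
      rw [show Real.exp (lam/c) * (-(Real.exp (-(lam*x+lam/c)) / (lam*x+lam/c)) * lam)
          = -((Real.exp (lam/c) * Real.exp (-(lam*x+lam/c))) * (lam/(lam*x+lam/c))) by ring,
        hee, hAc]
    rw [h4, Pi.neg_apply]
    ring
  have hcont : ContinuousWithinAt F (Set.Ici 0) 0 :=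
    (hderiv 0 (neg_lt_zero.mpr (by positivity))).continuousAt.continuousWithinAt
  have hint := integrableOn_g hlam hc
  have t1 : Tendsto (fun x => Real.exp (-(lam*x)) * Real.log (1+c*x)) atTop (nhds 0) := by
    have hup : Tendsto (fun x : ℝ => (c/lam) * ((lam*x) * Real.exp (-(lam*x)))) atTop (nhds 0) := by
      have hcomp : Tendsto (fun x : ℝ => lam * x) atTop atTop :=
        tendsto_id.const_mul_atTop hlam
      have := (Real.tendsto_pow_mul_exp_neg_atTop_nhds_zero 1).comp hcomp
      simpa using this.const_mul (c/lam)
    apply tendsto_of_tendsto_of_tendsto_of_le_of_le' tendsto_const_nhds hup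
    · filter_upwards [eventually_ge_atTop (0:ℝ)] with x hx
      have : 0 ≤ Real.log (1 + c*x) := Real.log_nonneg (by nlinarith)
      positivity
    · filter_upwards [eventually_ge_atTop (0:ℝ)] with x hx
      have hlog : Real.log (1 + c*x) ≤ c*x := by
        have := Real.log_le_sub_one_of_pos (x := 1 + c*x) (by nlinarith)
        linarith
      have h1 : Real.exp (-(lam*x)) * Real.log (1+c*x) ≤ Real.exp (-(lam*x)) * (c*x) :=
        mul_le_mul_of_nonneg_left hlog (Real.exp_nonneg _)
      have h2 : Real.exp (-(lam*x)) * (c*x) = (c/lam) * ((lam*x) * Real.exp (-(lam*x))) := by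
        field_simp
      linarith [h2 ▸ h1]
  have t2 : Tendsto (fun x => Real.exp (lam/c) * Phi (lam*x + lam/c)) atTop (nhds 0) := by
    have hcomp : Tendsto (fun x : ℝ => lam * x + lam/c) atTop atTop :=
      tendsto_atTop_add_const_right _ _ (tendsto_id.const_mul_atTop hlam)
    simpa using (Phi_tendsto.comp hcomp).const_mul (Real.exp (lam/c))
  have htend : Tendsto F atTop (nhds 0) := by
    have := t1.neg.sub t2
    simp only [neg_zero, sub_zero, zero_sub] at this ⊢
    convert this using 2 with x
    simp only [hF]
    ring
  have hFTC := integral_Ioi_of_hasDerivAt_of_tendsto hcont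
    (fun x hx => hderiv x (lt_trans (neg_lt_zero.mpr (by positivity)) hx)) hint htend
  rw [hFTC]
  simp [hF]

lemma Ei_neg (y : ℝ) : Ei (-y) = -Phi y := by simp [Ei, Phi]

lemma exponentialPDFReal_eq' (r x : ℝ) :
    exponentialPDFReal r x = if 0 ≤ x then r * Real.exp (-(r * x)) else 0 := by
  rw [exponentialPDFReal, gammaPDFReal]
  simp only [rpow_one, Real.Gamma_one, div_one, sub_self, Real.rpow_zero, mul_one]

lemma integral_expMeasure {lam : ℝ} (hlam : 0 < lam) (g : ℝ → ℝ) :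
    ∫ x, g x ∂(expMeasure lam) = ∫ x in Set.Ioi 0, lam * Real.exp (-(lam*x)) * g x := by
  have hmeas : Measurable fun x => (exponentialPDFReal lam x).toNNReal :=
    (measurable_exponentialPDFReal lam).real_toNNReal
  have h1 : expMeasure lam
      = volume.withDensity (fun x => ((exponentialPDFReal lam x).toNNReal : ℝ≥0∞)) := by
    rfl
  rw [h1, integral_withDensity_eq_integral_smul hmeas]
  have h2 : (fun x => (exponentialPDFReal lam x).toNNReal • g x)
      = Set.indicator (Set.Ici 0) (fun x => lam * Real.exp (-(lam*x)) * g x) := by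
    ext x
    rw [NNReal.smul_def, smul_eq_mul]
    rw [Real.coe_toNNReal _ (exponentialPDFReal_nonneg hlam x)]
    rw [exponentialPDFReal_eq']
    by_cases hx : 0 ≤ x
    · rw [if_pos hx]; simp [Set.indicator_apply, hx]
    · rw [if_neg hx]; simp [Set.indicator_apply, hx]
  rw [h2, integral_indicator measurableSet_Ici, integral_Ici_eq_integral_Ioi]

lemma ae_pos_expMeasure {lam : ℝ} (hlam : 0 < lam) :
    ∀ᵐ x ∂(expMeasure lam), 0 < x := by
  rw [ae_iff]
  have hset : {x : ℝ | ¬ 0 < x} = Set.Iic 0 := by ext x; simp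
  rw [hset, expMeasure, gammaMeasure, withDensity_apply _ measurableSet_Iic]
  have : ∀ᵐ x ∂(volume.restrict (Set.Iic 0)), gammaPDF 1 lam x = 0 := by
    have h0 : ∀ᵐ x ∂(volume.restrict (Set.Iic (0:ℝ))), x ≠ 0 := by
      refine ae_restrict_of_ae ?_
      rw [ae_iff]
      have : {x : ℝ | ¬ x ≠ 0} = {(0:ℝ)} := by ext x; simp
      rw [this]
      exact measure_singleton 0
    filter_upwards [h0, ae_restrict_mem measurableSet_Iic] with x hx0 hxle
    exact gammaPDF_of_neg (lt_of_le_of_ne hxle hx0)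
  rw [lintegral_congr_ae this]
  simp

theorem far_user_ergodic_rate (lam aF aN σ2 : ℝ) (hlam : 0 < lam)
    (haF : 0 < aF) (haN : 0 < aN) (hsum : aN + aF = 1) (hσ : 0 < σ2) :
    (∀ p : ℝ, 0 < p →
      ∫ x, Real.logb 2 (1 + p * x * aF / (σ2 + p * x * aN)) ∂(expMeasure lam) =
        (1 / Real.log 2) *
          (Real.exp (lam * σ2 / (aN * p)) * Ei (-(lam * σ2 / (aN * p))) -
            Real.exp (lam * σ2 / p) * Ei (-(lam * σ2 / p)))) ∧
    Filter.Tendsto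
      (fun p : ℝ => ∫ x, Real.logb 2 (1 + p * x * aF / (σ2 + p * x * aN)) ∂(expMeasure lam))
      Filter.atTop (nhds (-Real.logb 2 aN)) := by
  have hprob : IsProbabilityMeasure (expMeasure lam) := isProbabilityMeasure_expMeasure hlam
  constructor
  · intro p hp
    have hc1 : 0 < p/σ2 := by positivity
    have hc2 : 0 < p*aN/σ2 := by positivity
    rw [integral_expMeasure hlam]
    have hcong : Set.EqOn
        (fun x => lam * Real.exp (-(lam*x)) * Real.logb 2 (1 + p*x*aF/(σ2+p*x*aN)))
        (fun x => (1/Real.log 2) * (lam * Real.exp (-(lam*x)) * Real.log (1+(p/σ2)*x)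
          - lam * Real.exp (-(lam*x)) * Real.log (1+(p*aN/σ2)*x))) (Set.Ioi 0) := by
      intro x hx
      have hx0 : (0:ℝ) < x := hx
      have hden : 0 < σ2 + p*x*aN := by positivity
      have hnum : 0 < σ2 + p*x := by positivity
      have hfrac : 1 + p*x*aF/(σ2+p*x*aN) = (σ2+p*x)/(σ2+p*x*aN) := by
        field_simp
        nlinarith [hsum]
      have h1 : σ2 + p*x = σ2*(1+(p/σ2)*x) := by field_simp
      have h2 : σ2 + p*x*aN = σ2*(1+(p*aN/σ2)*x) := by field_simp
      have hp1 : 0 < 1+(p/σ2)*x := by positivity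
      have hp2 : 0 < 1+(p*aN/σ2)*x := by positivity
      simp only
      rw [hfrac, Real.logb, Real.log_div hnum.ne' hden.ne', h1, h2,
        Real.log_mul hσ.ne' hp1.ne', Real.log_mul hσ.ne' hp2.ne']
      ring
    rw [setIntegral_congr_fun measurableSet_Ioi hcong, integral_const_mul,
      integral_sub (integrableOn_g hlam hc1) (integrableOn_g hlam hc2),
      key hlam hc1, key hlam hc2]
    have e1 : lam / (p/σ2) = lam*σ2/p := div_div_eq_mul_div _ _ _
    have e2 : lam / (p*aN/σ2) = lam*σ2/(aN*p) := by
      rw [div_div_eq_mul_div, mul_comm p aN]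
    rw [e1, e2, Ei_neg, Ei_neg]
    ring
  · have hbnd : -Real.logb 2 aN = Real.logb 2 (1+aF/aN) := by
      have h : 1 + aF/aN = aN⁻¹ := by field_simp; linarith
      rw [h, Real.logb_inv]
    have hconst : ∫ _x, -Real.logb 2 aN ∂(expMeasure lam) = -Real.logb 2 aN := by simp
    rw [← hconst]
    apply MeasureTheory.tendsto_integral_filter_of_dominated_convergence
      (bound := fun _ => Real.logb 2 (1+aF/aN))
    · filter_upwards with p
      refine Measurable.aestronglyMeasurable ?_
      simp only [Real.logb]
      exact (Real.measurable_log.comp (measurable_const.add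
        (((measurable_id.const_mul p).mul_const aF).div
          (measurable_const.add ((measurable_id.const_mul p).mul_const aN))))).div_const _
    · filter_upwards [Filter.eventually_gt_atTop (0:ℝ)] with p hp
      filter_upwards [ae_pos_expMeasure hlam] with x hx
      have hden : 0 < σ2 + p*x*aN := by positivity
      have ht0 : 0 ≤ p*x*aF/(σ2+p*x*aN) :=
        div_nonneg (by positivity) hden.le
      have ht1 : p*x*aF/(σ2+p*x*aN) ≤ aF/aN := by
        rw [div_le_div_iff₀ hden haN]
        nlinarith [mul_pos haF hσ]
      rw [Real.norm_eq_abs, abs_of_nonneg (Real.logb_nonneg one_lt_two (by linarith))]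
      exact Real.logb_le_logb_of_le one_lt_two (by linarith) (by linarith)
    · exact integrable_const _
    · filter_upwards [ae_pos_expMeasure hlam] with x hx
      rw [hbnd]
      have hinner : Filter.Tendsto (fun p => p*x*aF/(σ2+p*x*aN)) Filter.atTop (nhds (aF/aN)) := by
        have heq : ∀ᶠ p in Filter.atTop, (x*aF)/(σ2/p + x*aN) = p*x*aF/(σ2+p*x*aN) := by
          filter_upwards [Filter.eventually_gt_atTop (0:ℝ)] with p hp
          rw [div_eq_div_iff (by positivity) (by positivity)]
          field_simp
        have hlim : Filter.Tendsto (fun p : ℝ => (x*aF)/(σ2/p + x*aN)) Filter.atTop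
            (nhds ((x*aF)/(0 + x*aN))) := by
          apply Filter.Tendsto.div tendsto_const_nhds
          · exact (Filter.Tendsto.div_atTop tendsto_const_nhds Filter.tendsto_id).add_const _
          · rw [zero_add]; exact (mul_pos hx haN).ne'
        rw [zero_add, mul_div_mul_left _ _ hx.ne'] at hlim
        exact hlim.congr' heq
      have h1ne : (1 : ℝ) + aF/aN ≠ 0 := by positivity
      simp only [Real.logb]
      exact ((hinner.const_add 1).log h1ne).div_const _
end
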